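/- Define the correction 𝓖^U(R) = (1/R) ∫_{S¹} (U − ⟨U⟩) U_R a^{-1} dθ, where ⟨U⟩ = P^{-1} ∫_{S¹} U a^{-1} dθ and P = ∫_{S¹} a^{-1} dθ. Then |𝓖^U(R)| ≤ (P(R)/(4πR)) 𝓔(R), where 𝓔(R) = ∫_{S¹} (a^{-1} U_R² + a U_θ²) dθ. -/

import Mathlib

open Real MeasureTheory intervalIntegral

section WirtingerAux

open Complex AddCircle


lemma parseval_cont {T : ℝ} [hT : Fact (0 < T)] (F : C(AddCircle T, ℂ)) :
    ∑' i : ℤ, ‖fourierCoeff (F : AddCircle T → ℂ) i‖ ^ 2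
      = ∫ t : AddCircle T, ‖F t‖ ^ 2 ∂haarAddCircle := by
  have h := tsum_sq_fourierCoeff (ContinuousMap.toLp (E := ℂ) 2 haarAddCircle ℂ F)
  simp_rw [fourierCoeff_toLp] at h
  rw [h]
  apply MeasureTheory.integral_congr_ae
  filter_upwards [ContinuousMap.coeFn_toLp (𝕜 := ℂ) (p := 2) (μ := haarAddCircle) F] with x hx
  rw [hx]

lemma summable_cont {T : ℝ} [hT : Fact (0 < T)] (F : C(AddCircle T, ℂ)) :
    Summable (fun i : ℤ => ‖fourierCoeff (F : AddCircle T → ℂ) i‖ ^ 2) := by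
  have hm : Memℓp (fourierBasis.repr (ContinuousMap.toLp (E := ℂ) 2 haarAddCircle ℂ F) : ℤ → ℂ) 2 :=
    lp.memℓp _
  have hs := (memℓp_gen_iff (by norm_num : (0:ℝ) < ENNReal.toReal 2)).mp hm
  have h2 : ENNReal.toReal 2 = (2:ℝ) := by norm_num
  rw [h2] at hs
  have he : (fun i : ℤ => ‖fourierCoeff (F : AddCircle T → ℂ) i‖ ^ (2:ℕ))
      = fun i : ℤ => ‖(fourierBasis.repr (ContinuousMap.toLp (E := ℂ) 2 haarAddCircle ℂ F) : ℤ → ℂ) i‖ ^ (2:ℝ) := by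
    ext i
    rw [fourierBasis_repr, fourierCoeff_toLp]
    norm_num
  rw [he]
  exact hs

-- haar integral of ‖F‖² as interval integral
lemma haar_int {T : ℝ} [hT : Fact (0 < T)] (F : C(AddCircle T, ℂ)) :
    (∫ t : AddCircle T, ‖F t‖ ^ 2 ∂haarAddCircle)
      = (1/T) * ∫ x in (0:ℝ)..T, ‖F (x : AddCircle T)‖ ^ 2 := by
  have h := AddCircle.intervalIntegral_preimage T 0 (fun z : AddCircle T => ‖F z‖ ^ 2)
  rw [zero_add] at h
  rw [volume_eq_smul_haarAddCircle, MeasureTheory.integral_smul_measure _ _,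
    ENNReal.toReal_ofReal hT.out.le] at h
  rw [h, smul_eq_mul]
  rw [one_div, inv_mul_cancel_left₀ hT.out.ne']

lemma wirtinger {T : ℝ} (hT : 0 < T) (g g' : ℝ → ℝ)
    (hg : ∀ x, HasDerivAt g (g' x) x) (hg'c : Continuous g')
    (hper : Function.Periodic g T)
    (hmean : (∫ x in (0:ℝ)..T, g x) = 0) :
    ∫ x in (0:ℝ)..T, (g x) ^ 2 ≤ (T / (2 * π)) ^ 2 * ∫ x in (0:ℝ)..T, (g' x) ^ 2 := by
  haveI : Fact (0 < T) := ⟨hT⟩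
  have hgc : Continuous g := by
    refine continuous_iff_continuousAt.mpr fun x => (hg x).continuousAt
  -- g' is periodic
  have hg'per : Function.Periodic g' T := by
    intro x
    have h1 : HasDerivAt (fun y => g (y + T)) (g' (x + T)) x := by
      have h := (hg (x + T)).comp x ((hasDerivAt_id x).add_const T)
      rw [mul_one] at h
      exact h
    have h2 : (fun y => g (y + T)) = g := funext fun y => hper y
    rw [h2] at h1
    exact h1.unique (hg x)
  set G : ℝ → ℂ := fun x => (g x : ℂ) with hG
  set G' : ℝ → ℂ := fun x => (g' x : ℂ) with hG'
  have hGper : Function.Periodic G T := fun x => by simp [hG, hper x]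
  have hG'per : Function.Periodic G' T := fun x => by simp [hG', hg'per x]
  have hGc : Continuous G := Complex.continuous_ofReal.comp hgc
  have hG'c : Continuous G' := Complex.continuous_ofReal.comp hg'c
  set F : C(AddCircle T, ℂ) := ⟨hGper.lift, continuous_coinduced_dom.mpr hGc⟩ with hF
  set F' : C(AddCircle T, ℂ) := ⟨hG'per.lift, continuous_coinduced_dom.mpr hG'c⟩ with hF'
  have hFc : ∀ x : ℝ, F (x : AddCircle T) = G x := fun x => hGper.lift_coe x
  have hF'c : ∀ x : ℝ, F' (x : AddCircle T) = G' x := fun x => hG'per.lift_coe x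
  -- coefficients
  set c : ℤ → ℂ := fun n => fourierCoeff (F : AddCircle T → ℂ) n with hc
  set d : ℤ → ℂ := fun n => fourierCoeff (F' : AddCircle T → ℂ) n with hd
  -- relate to fourierCoeffOn
  have hcOn : ∀ n : ℤ, c n = fourierCoeffOn hT G n := by
    intro n
    show fourierCoeff (F : AddCircle T → ℂ) n = _
    rw [fourierCoeff_eq_intervalIntegral _ n 0, fourierCoeffOn_eq_integral]
    simp only [zero_add, sub_zero]
    congr 1
    apply intervalIntegral.integral_congr
    intro x _
    simp only [hFc, fourier_coe_apply, sub_zero]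
  have hdOn : ∀ n : ℤ, d n = fourierCoeffOn hT G' n := by
    intro n
    show fourierCoeff (F' : AddCircle T → ℂ) n = _
    rw [fourierCoeff_eq_intervalIntegral _ n 0, fourierCoeffOn_eq_integral]
    simp only [zero_add, sub_zero]
    congr 1
    apply intervalIntegral.integral_congr
    intro x _
    simp only [hF'c, fourier_coe_apply, sub_zero]
  -- zeroth coefficient vanishes
  have hc0 : c 0 = 0 := by
    rw [hcOn 0, fourierCoeffOn_eq_integral]
    have : (∫ x in (0:ℝ)..T, (fourier (-(0:ℤ))) (x : AddCircle (T - 0)) • G x)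
        = ∫ x in (0:ℝ)..T, G x := by
      apply intervalIntegral.integral_congr
      intro x _
      simp
    rw [this]
    have : (∫ x in (0:ℝ)..T, G x) = ((∫ x in (0:ℝ)..T, g x : ℝ) : ℂ) := by
      rw [hG, intervalIntegral.integral_ofReal]
    rw [this, hmean]
    simp
  -- complex derivative
  have hGderiv : ∀ x : ℝ, HasDerivAt G (G' x) x := fun x => (hg x).ofReal_comp
  -- coefficient relation
  have hrel : ∀ n : ℤ, n ≠ 0 → c n = (T / (2 * π * Complex.I * n)) * d n := by
    intro n hn
    have hrel0 := fourierCoeffOn_of_hasDerivAt hT hn (fun x _ => hGderiv x)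
      (hG'c.intervalIntegrable 0 T)
    have hgT : g T = g 0 := by simpa using hper 0
    have hGT : G T - G 0 = 0 := by simp [hG, hgT]
    rw [hGT, mul_zero, zero_sub] at hrel0
    rw [hcOn n, hdOn n, hrel0]
    have hπ : (π : ℂ) ≠ 0 := Complex.ofReal_ne_zero.mpr Real.pi_ne_zero
    have hnc : (n : ℂ) ≠ 0 := Int.cast_ne_zero.mpr hn
    field_simp
    simp
  -- termwise bound on squared norms
  have hterm : ∀ n : ℤ, ‖c n‖ ^ 2 ≤ (T / (2 * π)) ^ 2 * ‖d n‖ ^ 2 := by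
    intro n
    rcases eq_or_ne n 0 with rfl | hn
    · have h0 : (0:ℝ) ≤ (T / (2 * π)) ^ 2 * ‖d 0‖ ^ 2 := by positivity
      simpa [hc0] using h0
    · rw [hrel n hn, norm_mul]
      have hnorm : ‖(T : ℂ) / (2 * π * Complex.I * n)‖ = T / (2 * π * |(n : ℝ)|) := by
        rw [norm_div]
        simp [Complex.norm_real, abs_of_pos hT, abs_of_pos Real.pi_pos]
      rw [mul_pow, hnorm]
      have h1 : (1:ℝ) ≤ |(n : ℝ)| := by
        rw [← Int.cast_abs]
        exact_mod_cast Int.one_le_abs hn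
      have h2 : T / (2 * π * |(n : ℝ)|) ≤ T / (2 * π) := by
        apply div_le_div_of_nonneg_left hT.le (by positivity)
        nlinarith [Real.pi_pos]
      have h3 : (0:ℝ) ≤ T / (2 * π * |(n : ℝ)|) := by positivity
      have h4 : (T / (2 * π * |(n : ℝ)|)) ^ 2 ≤ (T / (2 * π)) ^ 2 := pow_le_pow_left₀ h3 h2 2
      exact mul_le_mul_of_nonneg_right h4 (by positivity)
  -- Parseval
  have hsumc := summable_cont F
  have hsumd := summable_cont F'
  have hPc : ∑' n : ℤ, ‖c n‖ ^ 2 = (1/T) * ∫ x in (0:ℝ)..T, (g x) ^ 2 := by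
    rw [hc]
    rw [parseval_cont F, haar_int F]
    congr 1
    apply intervalIntegral.integral_congr
    intro x _
    simp only [hFc, hG, Complex.norm_real]
    exact sq_abs (g x)
  have hPd : ∑' n : ℤ, ‖d n‖ ^ 2 = (1/T) * ∫ x in (0:ℝ)..T, (g' x) ^ 2 := by
    rw [hd]
    rw [parseval_cont F', haar_int F']
    congr 1
    apply intervalIntegral.integral_congr
    intro x _
    simp only [hF'c, hG', Complex.norm_real]
    exact sq_abs (g' x)
  have hsum_le : ∑' n : ℤ, ‖c n‖ ^ 2 ≤ (T / (2 * π)) ^ 2 * ∑' n : ℤ, ‖d n‖ ^ 2 := by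
    rw [← tsum_mul_left]
    exact Summable.tsum_le_tsum hterm hsumc (hsumd.mul_left _)
  rw [hPc, hPd] at hsum_le
  have hT' : (0:ℝ) < 1/T := by positivity
  calc ∫ x in (0:ℝ)..T, (g x) ^ 2
      = T * ((1/T) * ∫ x in (0:ℝ)..T, (g x) ^ 2) := by field_simp
    _ ≤ T * ((T / (2 * π)) ^ 2 * ((1/T) * ∫ x in (0:ℝ)..T, (g' x) ^ 2)) := by
        apply mul_le_mul_of_nonneg_left hsum_le hT.le
    _ = (T / (2 * π)) ^ 2 * ∫ x in (0:ℝ)..T, (g' x) ^ 2 := by field_simp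

lemma weighted_wirtinger (w V V' : ℝ → ℝ)
    (hw : Continuous w) (hwpos : ∀ θ, 0 < w θ) (hwper : Function.Periodic w (2 * π))
    (hVd : ∀ θ, HasDerivAt V (V' θ) θ) (hV'c : Continuous V')
    (hVper : Function.Periodic V (2 * π))
    {P : ℝ} (hP : P = ∫ θ in (0:ℝ)..(2 * π), w θ)
    (hmean : (∫ θ in (0:ℝ)..(2 * π), V θ * w θ) = 0) :
    ∫ θ in (0:ℝ)..(2 * π), (V θ) ^ 2 * w θ
      ≤ (P / (2 * π)) ^ 2 * ∫ θ in (0:ℝ)..(2 * π), (V' θ) ^ 2 / w θ := by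
  have h2π : (0:ℝ) < 2 * π := by positivity
  have hPpos : 0 < P := by
    rw [hP]
    apply intervalIntegral.intervalIntegral_pos_of_pos_on (hw.intervalIntegrable 0 (2*π))
      (fun x _ => hwpos x) h2π
  -- the change of variables
  set ϑ : ℝ → ℝ := fun θ => ∫ t in (0:ℝ)..θ, w t with hϑ
  have hϑd : ∀ θ, HasDerivAt ϑ (w θ) θ := by
    intro θ
    exact intervalIntegral.integral_hasDerivAt_right (hw.intervalIntegrable 0 θ)
      hw.stronglyMeasurable.stronglyMeasurableAtFilter hw.continuousAt
  have hϑc : Continuous ϑ := by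
    refine continuous_iff_continuousAt.mpr fun x => (hϑd x).continuousAt
  have hϑmono : StrictMono ϑ :=
    strictMono_of_deriv_pos (fun x => by rw [(hϑd x).deriv]; exact hwpos x)
  have hϑadd : ∀ θ, ϑ (θ + 2 * π) = ϑ θ + P := by
    intro θ
    have h1 : (∫ t in (0:ℝ)..θ, w t) + (∫ t in θ..(θ + 2 * π), w t)
        = ∫ t in (0:ℝ)..(θ + 2 * π), w t :=
      intervalIntegral.integral_add_adjacent_intervals (hw.intervalIntegrable 0 θ)
        (hw.intervalIntegrable θ (θ + 2 * π))
    have h2 : (∫ t in θ..(θ + 2 * π), w t) = ∫ t in (0:ℝ)..(0 + 2 * π), w t :=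
      hwper.intervalIntegral_add_eq θ 0
    rw [hϑ]
    simp only []
    rw [← h1, h2, zero_add, hP]
  have hϑsurj : Function.Surjective ϑ := by
    have htop : Filter.Tendsto ϑ Filter.atTop Filter.atTop := by
      apply Filter.tendsto_atTop_atTop_of_monotone hϑmono.monotone
      intro b
      obtain ⟨n, hn⟩ := exists_nat_gt ((b - ϑ 0) / P)
      refine ⟨(n : ℝ) * (2 * π), ?_⟩
      have key : ∀ m : ℕ, ϑ ((m : ℝ) * (2 * π)) = ϑ 0 + m * P := by
        intro m
        induction m with
        | zero => simp
        | succ k ih =>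
          have : ((k + 1 : ℕ) : ℝ) * (2 * π) = (k : ℝ) * (2 * π) + 2 * π := by
            push_cast; ring
          rw [this, hϑadd, ih]
          push_cast; ring
      rw [key n]
      rw [div_lt_iff₀ hPpos] at hn
      nlinarith
    have hbot : Filter.Tendsto ϑ Filter.atBot Filter.atBot := by
      apply Filter.tendsto_atBot_atBot_of_monotone hϑmono.monotone
      intro b
      obtain ⟨n, hn⟩ := exists_nat_gt ((ϑ 0 - b) / P)
      refine ⟨-((n : ℝ) * (2 * π)), ?_⟩
      have key : ∀ m : ℕ, ϑ (-((m : ℝ) * (2 * π))) = ϑ 0 - m * P := by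
        intro m
        induction m with
        | zero => simp
        | succ k ih =>
          have h3 : -((k : ℝ) * (2 * π)) = -(((k + 1 : ℕ) : ℝ) * (2 * π)) + 2 * π := by
            push_cast; ring
          rw [h3, hϑadd] at ih
          push_cast at ih ⊢
          linarith
      rw [key n]
      rw [div_lt_iff₀ hPpos] at hn
      nlinarith
    exact Continuous.surjective hϑc htop hbot
  set E := StrictMono.orderIsoOfSurjective ϑ hϑmono hϑsurj with hE
  set ψ : ℝ → ℝ := fun s => E.symm s with hψ
  have hϑψ : ∀ s, ϑ (ψ s) = s := fun s => E.apply_symm_apply s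
  have hψϑ : ∀ θ, ψ (ϑ θ) = θ := fun θ => E.symm_apply_apply θ
  have hψc : Continuous ψ := (OrderIso.continuous E.symm)
  have hψd : ∀ s, HasDerivAt ψ ((w (ψ s))⁻¹) s := by
    intro s
    exact HasDerivAt.of_local_left_inverse (hψc.continuousAt) (hϑd (ψ s))
      (hwpos (ψ s)).ne' (Filter.Eventually.of_forall hϑψ)
  set g : ℝ → ℝ := fun s => V (ψ s) with hg
  set g' : ℝ → ℝ := fun s => V' (ψ s) / w (ψ s) with hg'
  have hVc : Continuous V := continuous_iff_continuousAt.mpr fun x => (hVd x).continuousAt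
  have hgd : ∀ s, HasDerivAt g (g' s) s := by
    intro s
    have h := (hVd (ψ s)).comp s (hψd s)
    have : V' (ψ s) * (w (ψ s))⁻¹ = g' s := by
      rw [hg']; simp only []; rw [div_eq_mul_inv]
    rw [this] at h
    exact h
  have hg'c : Continuous g' := (hV'c.comp hψc).div (hw.comp hψc) (fun s => (hwpos _).ne')
  have hgper : Function.Periodic g P := by
    intro s
    have hψP : ψ (s + P) = ψ s + 2 * π := by
      apply hϑmono.injective
      rw [hϑψ, hϑadd, hϑψ]
    rw [hg]
    simp only []
    rw [hψP, hVper (ψ s)]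
  have hcov : ∀ G : ℝ → ℝ, Continuous G →
      (∫ s in (0:ℝ)..P, G s) = ∫ θ in (0:ℝ)..(2 * π), w θ * G (ϑ θ) := by
    intro G hG
    have h := intervalIntegral.integral_comp_smul_deriv
      (f := ϑ) (f' := w) (g := G) (a := 0) (b := 2 * π)
      (fun x _ => hϑd x) hw.continuousOn hG
    have hϑ0 : ϑ 0 = 0 := intervalIntegral.integral_same
    have hϑ2π : ϑ (2 * π) = P := by rw [← zero_add (2 * π), hϑadd, hϑ0, zero_add]
    rw [hϑ0, hϑ2π] at h
    rw [← h]
    apply intervalIntegral.integral_congr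
    intro x _
    simp [smul_eq_mul]
  have hmean' : (∫ s in (0:ℝ)..P, g s) = 0 := by
    rw [hcov g (hVc.comp hψc)]
    have heq : (∫ θ in (0:ℝ)..(2 * π), w θ * g (ϑ θ)) = ∫ θ in (0:ℝ)..(2 * π), V θ * w θ := by
      apply intervalIntegral.integral_congr
      intro x _
      rw [hg]
      simp only []
      rw [hψϑ x]
      ring
    rw [heq, hmean]
  have hsq : (∫ s in (0:ℝ)..P, (g s) ^ 2) = ∫ θ in (0:ℝ)..(2 * π), (V θ) ^ 2 * w θ := by
    rw [hcov (fun s => (g s) ^ 2) ((hVc.comp hψc).pow 2)]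
    apply intervalIntegral.integral_congr
    intro x _
    rw [hg]
    simp only []
    rw [hψϑ x]
    ring
  have hsq' : (∫ s in (0:ℝ)..P, (g' s) ^ 2) = ∫ θ in (0:ℝ)..(2 * π), (V' θ) ^ 2 / w θ := by
    rw [hcov (fun s => (g' s) ^ 2) (hg'c.pow 2)]
    apply intervalIntegral.integral_congr
    intro x _
    rw [hg']
    simp only []
    rw [hψϑ x]
    field_simp [(hwpos x).ne']
  have hW := wirtinger hPpos g g' hgd hg'c hgper hmean'
  rw [hsq, hsq'] at hW
  exact hW

lemma amgm {c : ℝ} (hc : 0 < c) (x y : ℝ) :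
    |x * y| ≤ (c / 2) * x ^ 2 + (1 / (2 * c)) * y ^ 2 := by
  have h1 : |x * y| * (2 * c) ≤ c ^ 2 * x ^ 2 + y ^ 2 := by
    rw [abs_mul]
    nlinarith [sq_nonneg (c * |x| - |y|), _root_.sq_abs x, _root_.sq_abs y, abs_nonneg x, abs_nonneg y,
      mul_nonneg (abs_nonneg x) (abs_nonneg y)]
  have h2 : (0:ℝ) < 2 * c := by linarith
  calc |x * y| = |x * y| * (2 * c) / (2 * c) := by field_simp
    _ ≤ (c ^ 2 * x ^ 2 + y ^ 2) / (2 * c) := by gcongr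
    _ = (c / 2) * x ^ 2 + (1 / (2 * c)) * y ^ 2 := by field_simp

/-- Estimate for the energy correction
`𝓖^U(R) = (1/R) ∫_{S¹} (U − ⟨U⟩) U_R a⁻¹ dθ`, where
`⟨U⟩ = P⁻¹ ∫_{S¹} U a⁻¹ dθ` and `P = ∫_{S¹} a⁻¹ dθ`:
`|𝓖^U(R)| ≤ (P(R)/(4πR)) 𝓔(R)` with `𝓔 = ∫_{S¹} (a⁻¹U_R² + aU_θ²) dθ`. -/
theorem correction_estimate
    (R₀ : ℝ) (hR₀ : 0 < R₀)
    (U a : ℝ → ℝ → ℝ)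
    (hU : ContDiff ℝ (⊤ : ℕ∞) (fun p : ℝ × ℝ => U p.1 p.2))
    (ha : ContDiff ℝ (⊤ : ℕ∞) (fun p : ℝ × ℝ => a p.1 p.2))
    (hapos : ∀ R θ, 0 < a R θ)
    (hUper : ∀ R, Function.Periodic (U R) (2 * π))
    (haper : ∀ R, Function.Periodic (a R) (2 * π))
    (P : ℝ → ℝ) (hPdef : ∀ R, P R = ∫ θ in (0:ℝ)..(2 * π), (a R θ)⁻¹)
    (𝓔 : ℝ → ℝ)
    (h𝓔 : ∀ R, 𝓔 R = ∫ θ in (0:ℝ)..(2 * π),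
      ((a R θ)⁻¹ * (deriv (fun r => U r θ) R) ^ 2 + a R θ * (deriv (U R) θ) ^ 2))
    (𝓖 : ℝ → ℝ)
    (h𝓖 : ∀ R, 𝓖 R = (1 / R) * ∫ θ in (0:ℝ)..(2 * π),
      (U R θ - (P R)⁻¹ * ∫ θ' in (0:ℝ)..(2 * π), U R θ' * (a R θ')⁻¹)
        * deriv (fun r => U r θ) R * (a R θ)⁻¹) :
    ∀ R ∈ Set.Ici R₀, |𝓖 R| ≤ P R / (4 * π * R) * 𝓔 R := by
  intro R hR
  have hRpos : 0 < R := lt_of_lt_of_le hR₀ hR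
  have hπ := Real.pi_pos
  have h2π : (0:ℝ) < 2 * π := by positivity
  -- basic functions
  set w : ℝ → ℝ := fun θ => (a R θ)⁻¹ with hw
  set Uc : ℝ × ℝ → ℝ := fun p => U p.1 p.2 with hUc
  -- continuity of slices
  have haC : Continuous (fun θ => a R θ) :=
    ha.continuous.comp (continuous_const.prodMk continuous_id)
  have hwC : Continuous w := haC.inv₀ (fun θ => (hapos R θ).ne')
  have hwpos : ∀ θ, 0 < w θ := fun θ => inv_pos.mpr (hapos R θ)
  have hwper : Function.Periodic w (2 * π) := fun θ => by
    rw [hw]; simp only []; rw [haper R θ]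
  -- P R > 0
  have hPpos : 0 < P R := by
    rw [hPdef R]
    exact intervalIntegral.intervalIntegral_pos_of_pos_on (hwC.intervalIntegrable 0 (2 * π))
      (fun x _ => hwpos x) h2π
  -- derivatives as fderiv slices
  have hUdiff : Differentiable ℝ Uc := hU.differentiable (by simp)
  have hdR : ∀ θ, HasDerivAt (fun r => U r θ) (fderiv ℝ Uc (R, θ) (1, 0)) R := by
    intro θ
    have hline : HasDerivAt (fun t : ℝ => (t, θ)) ((1:ℝ), (0:ℝ)) R :=
      (hasDerivAt_id R).prodMk (hasDerivAt_const R θ)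
    exact (hUdiff (R, θ)).hasFDerivAt.comp_hasDerivAt R hline
  have hdθ : ∀ θ, HasDerivAt (U R) (fderiv ℝ Uc (R, θ) (0, 1)) θ := by
    intro θ
    have hline : HasDerivAt (fun t : ℝ => (R, t)) ((0:ℝ), (1:ℝ)) θ :=
      (hasDerivAt_const θ R).prodMk (hasDerivAt_id θ)
    exact (hUdiff (R, θ)).hasFDerivAt.comp_hasDerivAt θ hline
  have hderivR : ∀ θ, deriv (fun r => U r θ) R = fderiv ℝ Uc (R, θ) (1, 0) :=
    fun θ => (hdR θ).deriv
  have hderivθ : ∀ θ, deriv (U R) θ = fderiv ℝ Uc (R, θ) (0, 1) :=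
    fun θ => (hdθ θ).deriv
  set uR : ℝ → ℝ := fun θ => deriv (fun r => U r θ) R with huR
  set uθ : ℝ → ℝ := fun θ => deriv (U R) θ with huθ
  have hfC : Continuous (fderiv ℝ Uc) := hU.continuous_fderiv (by simp)
  have huRC : Continuous uR := by
    have : Continuous (fun θ => fderiv ℝ Uc (R, θ) ((1:ℝ), (0:ℝ))) :=
      (hfC.comp (continuous_const.prodMk continuous_id)).clm_apply continuous_const
    exact this.congr (fun θ => (hderivR θ).symm)
  have huθC : Continuous uθ := by
    have : Continuous (fun θ => fderiv ℝ Uc (R, θ) ((0:ℝ), (1:ℝ))) :=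
      (hfC.comp (continuous_const.prodMk continuous_id)).clm_apply continuous_const
    exact this.congr (fun θ => (hderivθ θ).symm)
  have huC : Continuous (U R) := hU.continuous.comp (continuous_const.prodMk continuous_id)
  -- the mean and V
  set M : ℝ := (P R)⁻¹ * ∫ θ' in (0:ℝ)..(2 * π), U R θ' * (a R θ')⁻¹ with hM
  set V : ℝ → ℝ := fun θ => U R θ - M with hV
  have hVC : Continuous V := huC.sub continuous_const
  have hVd : ∀ θ, HasDerivAt V (uθ θ) θ := by
    intro θ
    rw [huθ]
    simp only []
    rw [hderivθ θ]
    exact (hdθ θ).sub_const M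
  have hVper : Function.Periodic V (2 * π) := fun θ => by
    rw [hV]; simp only []; rw [hUper R θ]
  have hmean : (∫ θ in (0:ℝ)..(2 * π), V θ * w θ) = 0 := by
    have hsplit : (∫ θ in (0:ℝ)..(2 * π), V θ * w θ)
        = (∫ θ in (0:ℝ)..(2 * π), U R θ * w θ) - M * ∫ θ in (0:ℝ)..(2 * π), w θ := by
      rw [← intervalIntegral.integral_const_mul, ← intervalIntegral.integral_sub
        (f := fun θ => U R θ * w θ) (g := fun x => M * w x) ((huC.mul hwC).intervalIntegrable _ _) ((continuous_const.mul hwC).intervalIntegrable _ _)]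
      apply intervalIntegral.integral_congr
      intro x _
      rw [hV]; simp only []; ring
    have hIw : (∫ θ in (0:ℝ)..(2 * π), U R θ * w θ)
        = ∫ θ' in (0:ℝ)..(2 * π), U R θ' * (a R θ')⁻¹ := rfl
    rw [hsplit, hIw, ← hPdef R, hM]
    have hcan : (P R)⁻¹ * (∫ θ' in (0:ℝ)..(2 * π), U R θ' * (a R θ')⁻¹) * P R
        = ∫ θ' in (0:ℝ)..(2 * π), U R θ' * (a R θ')⁻¹ := by
      field_simp
    rw [hcan, sub_self]
  -- weighted Wirtinger
  have hWW := weighted_wirtinger w V uθ hwC hwpos hwper hVd huθC hVper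
    (P := P R) (by rw [hPdef R]) hmean
  set A : ℝ := ∫ θ in (0:ℝ)..(2 * π), (V θ) ^ 2 * w θ with hA
  set B : ℝ := ∫ θ in (0:ℝ)..(2 * π), (uR θ) ^ 2 * w θ with hB
  set C : ℝ := ∫ θ in (0:ℝ)..(2 * π), a R θ * (uθ θ) ^ 2 with hC
  have hdivC : (∫ θ in (0:ℝ)..(2 * π), (uθ θ) ^ 2 / w θ) = C := by
    rw [hC]
    apply intervalIntegral.integral_congr
    intro x _
    rw [hw]
    simp only []
    rw [div_eq_mul_inv, inv_inv]
    ring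
  rw [hdivC] at hWW
  -- nonnegativity of B and C
  have hBnn : 0 ≤ B := by
    rw [hB]
    apply intervalIntegral.integral_nonneg h2π.le
    intro x _
    exact mul_nonneg (sq_nonneg _) (hwpos x).le
  have hCnn : 0 ≤ C := by
    rw [hC]
    apply intervalIntegral.integral_nonneg h2π.le
    intro x _
    exact mul_nonneg (hapos R x).le (sq_nonneg _)
  -- energy splits
  have hE : 𝓔 R = B + C := by
    rw [h𝓔 R, hB, hC]
    rw [← intervalIntegral.integral_add
      (f := fun θ => uR θ ^ 2 * w θ) (g := fun θ => a R θ * uθ θ ^ 2) ((huRC.pow 2 |>.mul hwC).intervalIntegrable _ _)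
      ((haC.mul (huθC.pow 2)).intervalIntegrable _ _)]
    apply intervalIntegral.integral_congr
    intro x _
    rw [hw]
    simp only []
    ring
  -- pointwise AM-GM bound
  have hAM : ∀ θ, |V θ * uR θ * w θ|
      ≤ (π / P R) * ((V θ) ^ 2 * w θ) + (P R / (4 * π)) * ((uR θ) ^ 2 * w θ) := by
    intro θ
    have hc : (0:ℝ) < 2 * π / P R := by positivity
    have h1 := amgm hc (V θ) (uR θ)
    have h2 : (2 * π / P R) / 2 = π / P R := by ring
    have h3 : 1 / (2 * (2 * π / P R)) = P R / (4 * π) := by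
      rw [div_eq_div_iff (by positivity) (by positivity)]
      field_simp
      ring
    rw [h2, h3] at h1
    calc |V θ * uR θ * w θ| = |V θ * uR θ| * w θ := by
          rw [abs_mul, abs_of_pos (hwpos θ)]
      _ ≤ (π / P R * (V θ) ^ 2 + P R / (4 * π) * (uR θ) ^ 2) * w θ := by
          exact mul_le_mul_of_nonneg_right h1 (hwpos θ).le
      _ = (π / P R) * ((V θ) ^ 2 * w θ) + (P R / (4 * π)) * ((uR θ) ^ 2 * w θ) := by ring
  -- integral bound
  set I : ℝ := ∫ θ in (0:ℝ)..(2 * π), V θ * uR θ * w θ with hI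
  have hIC : Continuous (fun θ => V θ * uR θ * w θ) := (hVC.mul huRC).mul hwC
  have hIbound : |I| ≤ (π / P R) * A + (P R / (4 * π)) * B := by
    have step1 : |I| ≤ ∫ θ in (0:ℝ)..(2 * π), |V θ * uR θ * w θ| :=
      intervalIntegral.abs_integral_le_integral_abs h2π.le
    have step2 : (∫ θ in (0:ℝ)..(2 * π), |V θ * uR θ * w θ|)
        ≤ ∫ θ in (0:ℝ)..(2 * π),
          ((π / P R) * ((V θ) ^ 2 * w θ) + (P R / (4 * π)) * ((uR θ) ^ 2 * w θ)) := by
      apply intervalIntegral.integral_mono_on h2π.le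
        (hIC.abs.intervalIntegrable _ _)
        (((continuous_const.mul ((hVC.pow 2).mul hwC)).add
          (continuous_const.mul ((huRC.pow 2).mul hwC))).intervalIntegrable _ _)
      intro x _
      exact hAM x
    have step3 : (∫ θ in (0:ℝ)..(2 * π),
          ((π / P R) * ((V θ) ^ 2 * w θ) + (P R / (4 * π)) * ((uR θ) ^ 2 * w θ)))
        = (π / P R) * A + (P R / (4 * π)) * B := by
      rw [hA, hB, ← intervalIntegral.integral_const_mul, ← intervalIntegral.integral_const_mul,
        ← intervalIntegral.integral_add
          (f := fun x => π / P R * (V x ^ 2 * w x)) (g := fun x => P R / (4 * π) * (uR x ^ 2 * w x))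
          ((continuous_const.mul ((hVC.pow 2).mul hwC)).intervalIntegrable _ _)
          ((continuous_const.mul ((huRC.pow 2).mul hwC)).intervalIntegrable _ _)]
    calc |I| ≤ _ := step1
      _ ≤ _ := step2
      _ = _ := step3
  -- combine with Wirtinger
  have hcoef : (π / P R) * ((P R / (2 * π)) ^ 2) = P R / (4 * π) := by
    field_simp
    ring
  have hfinal : |I| ≤ (P R / (4 * π)) * 𝓔 R := by
    have hAC : (π / P R) * A ≤ (P R / (4 * π)) * C := by
      calc (π / P R) * A ≤ (π / P R) * ((P R / (2 * π)) ^ 2 * C) := by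
            apply mul_le_mul_of_nonneg_left hWW (by positivity)
        _ = (P R / (4 * π)) * C := by rw [← mul_assoc, hcoef]
    rw [hE, mul_add]
    calc |I| ≤ (π / P R) * A + (P R / (4 * π)) * B := hIbound
      _ ≤ (P R / (4 * π)) * C + (P R / (4 * π)) * B := by linarith
      _ = (P R / (4 * π)) * B + (P R / (4 * π)) * C := by ring
  -- conclude
  have h𝓖I : 𝓖 R = (1 / R) * I := h𝓖 R
  rw [h𝓖I, abs_mul, abs_of_pos (by positivity : (0:ℝ) < 1 / R)]
  calc (1 / R) * |I| ≤ (1 / R) * ((P R / (4 * π)) * 𝓔 R) :=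
        mul_le_mul_of_nonneg_left hfinal (by positivity)
    _ = P R / (4 * π * R) * 𝓔 R := by
        field_simp
        try exact Or.inl trivial

end WirtingerAux
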